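/- arXiv:1212.2193 — 5 statements merged into one kernel-verified Lean document; each statement's English description precedes it below -/
import Mathlib

section
/- In the Artin braid group B_4, the product of the local braid monodromy contributions of two conics meeting at four nodes (four node braids and two branch-point braids) satisfies σ_2² · (σ_3 σ_2² σ_3^{−1}) · (σ_2^{−1} σ_1² σ_2) · (σ_3 σ_2^{−1} σ_1² σ_2 σ_3^{−1}) · σ_3 · σ_1 = σ_2 σ_3² σ_1² σ_2 σ_3 σ_1 σ_2². -/
/-- The braid relations among `m` Artin generators `σ_1, …, σ_m`, where the
generator `σ_{k+1}` is represented by the index `k : Fin m`: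
`σ_i σ_{i+1} σ_i = σ_{i+1} σ_i σ_{i+1}` and `σ_i σ_j = σ_j σ_i` for `|i - j| ≥ 2`. -/
def braidRels (m : ℕ) : Set (FreeGroup (Fin m)) :=
  { r | (∃ i j : Fin m, (i : ℕ) + 1 = (j : ℕ) ∧
          r = FreeGroup.of i * FreeGroup.of j * FreeGroup.of i *
              (FreeGroup.of j * FreeGroup.of i * FreeGroup.of j)⁻¹) ∨
        (∃ i j : Fin m, (i : ℕ) + 2 ≤ (j : ℕ) ∧
          r = FreeGroup.of i * FreeGroup.of j * (FreeGroup.of i)⁻¹ * (FreeGroup.of j)⁻¹) }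

/-- The Artin braid group `B_n` on `n` strands, presented by the generators
`σ_1, …, σ_{n-1}` subject to the braid relations. -/
def BraidGroup (n : ℕ) : Type := PresentedGroup (braidRels (n - 1))

instance (n : ℕ) : Group (BraidGroup n) :=
  inferInstanceAs (Group (PresentedGroup (braidRels (n - 1))))

/-- The Artin generator `σ_k` of the braid group `B_n`, defined for `1 ≤ k ≤ n - 1`
(with junk value `1` for indices out of range). -/
def σ (n : ℕ) (k : ℕ) : BraidGroup n :=
  if h : 1 ≤ k ∧ k ≤ n - 1 then
    (PresentedGroup.of (⟨k - 1, by omega⟩ : Fin (n - 1)) : PresentedGroup (braidRels (n - 1)))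
  else 1

lemma braid_rel_eq_one {m : ℕ} {r : FreeGroup (Fin m)} (h : r ∈ braidRels m) :
    (QuotientGroup.mk r : PresentedGroup (braidRels m)) = 1 :=
  (QuotientGroup.eq_one_iff r).2 (Subgroup.subset_normalClosure h)

lemma braid_rel {m : ℕ} (i j : Fin m) (h : (i : ℕ) + 1 = (j : ℕ)) :
    (PresentedGroup.of i * PresentedGroup.of j * PresentedGroup.of i :
      PresentedGroup (braidRels m)) =
      PresentedGroup.of j * PresentedGroup.of i * PresentedGroup.of j := by
  have h1 : (QuotientGroup.mk (FreeGroup.of i * FreeGroup.of j * FreeGroup.of i *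
      (FreeGroup.of j * FreeGroup.of i * FreeGroup.of j)⁻¹) :
      PresentedGroup (braidRels m)) = 1 :=
    braid_rel_eq_one (Or.inl ⟨i, j, h, rfl⟩)
  have h2 : (PresentedGroup.of i * PresentedGroup.of j * PresentedGroup.of i *
      (PresentedGroup.of j * PresentedGroup.of i * PresentedGroup.of j)⁻¹ :
      PresentedGroup (braidRels m)) = 1 := h1
  exact mul_inv_eq_one.mp h2


lemma braid_calc {G : Type*} [Group G] (a b c : G)
    (hab : a * b * a = b * a * b) (hbc : b * c * b = c * b * c) :
    b ^ 2 * (c * b ^ 2 * c⁻¹) * (b⁻¹ * a ^ 2 * b) *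
        (c * b⁻¹ * a ^ 2 * b * c⁻¹) * c * a =
      b * c ^ 2 * a ^ 2 * b * c * a * b ^ 2 := by
  simp only [pow_two]
  have hcb : c * b * c⁻¹ = b⁻¹ * c * b := by
    have h : b * (c * b * c⁻¹) = b * (b⁻¹ * c * b) := by
      have e : b * (c * b * c⁻¹) = (b * c * b) * c⁻¹ := by group
      rw [e, hbc]; group
    exact mul_left_cancel h
  have h1 : c * (b * b) * c⁻¹ = b⁻¹ * (c * c) * b := by
    have e : c * (b * b) * c⁻¹ = (c * b * c⁻¹) * (c * b * c⁻¹) := by group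
    rw [e, hcb]; group
  have h2 : a * a * b * a = b * a * (b * b) := by
    have e1 : a * a * b * a = a * (a * b * a) := by group
    rw [e1, hab]
    have e2 : a * (b * a * b) = (a * b * a) * b := by group
    rw [e2, hab]; group
  calc b * b * (c * (b * b) * c⁻¹) * (b⁻¹ * (a * a) * b) *
        (c * b⁻¹ * (a * a) * b * c⁻¹) * c * a
      = b * b * (b⁻¹ * (c * c) * b) * (b⁻¹ * (a * a) * b) *
        (c * b⁻¹ * (a * a) * b * c⁻¹) * c * a := by rw [h1]
    _ = b * (c * c) * (a * a) * b * c * b⁻¹ * (a * a * b * a) := by group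
    _ = b * (c * c) * (a * a) * b * c * b⁻¹ * (b * a * (b * b)) := by rw [h2]
    _ = b * (c * c) * (a * a) * b * c * a * (b * b) := by group

/-- In `B_4`, the product of the local contributions of two conics meeting at four nodes
satisfies
`σ₂² (σ₃ σ₂² σ₃⁻¹)(σ₂⁻¹ σ₁² σ₂)(σ₃ σ₂⁻¹ σ₁² σ₂ σ₃⁻¹) σ₃ σ₁ = σ₂ σ₃² σ₁² σ₂ σ₃ σ₁ σ₂²`. -/
theorem two_conics_four_nodes_braid :
    σ 4 2 ^ 2 * (σ 4 3 * σ 4 2 ^ 2 * (σ 4 3)⁻¹) * ((σ 4 2)⁻¹ * σ 4 1 ^ 2 * σ 4 2) *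
        (σ 4 3 * (σ 4 2)⁻¹ * σ 4 1 ^ 2 * σ 4 2 * (σ 4 3)⁻¹) * σ 4 3 * σ 4 1 =
      σ 4 2 * σ 4 3 ^ 2 * σ 4 1 ^ 2 * σ 4 2 * σ 4 3 * σ 4 1 * σ 4 2 ^ 2 := by
  have ha' : σ 4 1 = (PresentedGroup.of (0 : Fin 3) : PresentedGroup (braidRels 3)) := by
    rw [σ]; norm_num; rfl
  have hb' : σ 4 2 = (PresentedGroup.of (1 : Fin 3) : PresentedGroup (braidRels 3)) := by
    rw [σ]; norm_num; rfl
  have hc' : σ 4 3 = (PresentedGroup.of (2 : Fin 3) : PresentedGroup (braidRels 3)) := by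
    rw [σ]; norm_num; rfl
  have hab : σ 4 1 * σ 4 2 * σ 4 1 = σ 4 2 * σ 4 1 * σ 4 2 := by
    rw [ha', hb']; exact braid_rel (0 : Fin 3) 1 (by norm_num)
  have hbc : σ 4 2 * σ 4 3 * σ 4 2 = σ 4 3 * σ 4 2 * σ 4 3 := by
    rw [hb', hc']; exact braid_rel (1 : Fin 3) 2 (by norm_num)
  exact braid_calc (σ 4 1) (σ 4 2) (σ 4 3) hab hbc
end

section
/- In the Artin braid group B_n, for every 1 ≤ i ≤ n−2, the product of the three cusp braids arising from regenerating a tangency on the conic side satisfies (σ_{i+1}^{−1} σ_i³ σ_{i+1}) · σ_i³ · (σ_{i+1} σ_i³ σ_{i+1}^{−1}) = σ_i σ_{i+1}³ σ_i σ_{i+1}³ σ_i. -/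
/-- In any group, if `a b a = b a b`, then
`(b⁻¹ a³ b) a³ (b a³ b⁻¹) = a b³ a b³ a`. -/
lemma three_cusps_abstract {G : Type*} [Group G] (a b : G) (h : a * b * a = b * a * b) :
    (b⁻¹ * a ^ 3 * b) * a ^ 3 * (b * a ^ 3 * b⁻¹) = a * b ^ 3 * a * b ^ 3 * a := by
  have E : a*a*a*b*a*a*a*b*a*a*a = b*a*b*b*b*a*b*b*b*a*b := by
    calc a*a*a*b*a*a*a*b*a*a*a = a*a*(a*b*a)*a*a*b*a*a*a := by group
    _ = a*a*(b*a*b)*a*a*b*a*a*a := by rw [h]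
    _ = a*(a*b*a)*b*a*a*b*a*a*a := by group
    _ = a*(b*a*b)*b*a*a*b*a*a*a := by rw [h]
    _ = (a*b*a)*b*b*a*a*b*a*a*a := by group
    _ = (b*a*b)*b*b*a*a*b*a*a*a := by rw [h]
    _ = b*a*b*b*b*a*(a*b*a)*a*a := by group
    _ = b*a*b*b*b*a*(b*a*b)*a*a := by rw [h]
    _ = b*a*b*b*b*a*b*(a*b*a)*a := by group
    _ = b*a*b*b*b*a*b*(b*a*b)*a := by rw [h]
    _ = b*a*b*b*b*a*b*b*(a*b*a) := by group
    _ = b*a*b*b*b*a*b*b*(b*a*b) := by rw [h]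
    _ = b*a*b*b*b*a*b*b*b*a*b := by group
  calc (b⁻¹ * a ^ 3 * b) * a ^ 3 * (b * a ^ 3 * b⁻¹)
      = b⁻¹ * (a*a*a*b*a*a*a*b*a*a*a) * b⁻¹ := by
        simp only [pow_succ, pow_zero, one_mul, mul_assoc]
    _ = b⁻¹ * (b*a*b*b*b*a*b*b*b*a*b) * b⁻¹ := by rw [E]
    _ = a * b ^ 3 * a * b ^ 3 * a := by
        simp only [pow_succ, pow_zero, one_mul, mul_assoc, inv_mul_cancel_left,
          mul_inv_cancel_left, inv_mul_cancel, mul_inv_cancel, mul_one]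

/-- In `B_n`, for `1 ≤ i ≤ n - 2`, the product of the three cusp braids from
regenerating a tangency on the conic side satisfies
`(σ_{i+1}⁻¹ σ_i³ σ_{i+1}) σ_i³ (σ_{i+1} σ_i³ σ_{i+1}⁻¹) = σ_i σ_{i+1}³ σ_i σ_{i+1}³ σ_i`. -/
theorem three_cusps_conic_side (n i : ℕ) (h1 : 1 ≤ i) (h2 : i ≤ n - 2) :
    ((σ n (i + 1))⁻¹ * σ n i ^ 3 * σ n (i + 1)) * σ n i ^ 3 *
        (σ n (i + 1) * σ n i ^ 3 * (σ n (i + 1))⁻¹) =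
      σ n i * σ n (i + 1) ^ 3 * σ n i * σ n (i + 1) ^ 3 * σ n i := by
  apply three_cusps_abstract
  have hi : 1 ≤ i ∧ i ≤ n - 1 := ⟨h1, by omega⟩
  have hi1 : 1 ≤ i + 1 ∧ i + 1 ≤ n - 1 := ⟨by omega, by omega⟩
  erw [σ, σ, dif_pos hi, dif_pos hi1]
  set x : Fin (n-1) := ⟨i - 1, by omega⟩
  set y : Fin (n-1) := ⟨i + 1 - 1, by omega⟩
  have hrel : FreeGroup.of x * FreeGroup.of y * FreeGroup.of x *
      (FreeGroup.of y * FreeGroup.of x * FreeGroup.of y)⁻¹ ∈ braidRels (n - 1) := by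
    left
    exact ⟨x, y, by simp [x, y]; omega, rfl⟩
  have h1' : (PresentedGroup.of x * PresentedGroup.of y * PresentedGroup.of x *
      (PresentedGroup.of y * PresentedGroup.of x * PresentedGroup.of y)⁻¹ :
      PresentedGroup (braidRels (n-1))) = 1 := by
    have := (QuotientGroup.eq_one_iff (G := FreeGroup (Fin (n-1)))
      (N := Subgroup.normalClosure (braidRels (n-1)))
      (FreeGroup.of x * FreeGroup.of y * FreeGroup.of x *
        (FreeGroup.of y * FreeGroup.of x * FreeGroup.of y)⁻¹)).2
      (Subgroup.subset_normalClosure hrel)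
    exact this
  have := mul_eq_one_iff_eq_inv.mp h1'
  erw [this]
  group
  rfl
end

section
/- In the Artin braid group B_n, for every 1 ≤ i ≤ n−2, the product of the three cusp braids arising from regenerating a tangency on the line side satisfies σ_{i+1}³ · (σ_{i+1}^{−1} σ_i³ σ_{i+1}) · (σ_i² σ_{i+1}³ σ_i^{−2}) = σ_{i+1} σ_i³ σ_{i+1} σ_i³ σ_{i+1}. -/
lemma cusp_key {G : Type*} [Group G] (a b : G) (h : a * b * a = b * a * b) :
    b ^ 3 * (b⁻¹ * a ^ 3 * b) * (a ^ 2 * b ^ 3 * (a ^ 2)⁻¹) =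
      b * a ^ 3 * b * a ^ 3 * b := by
  have key : b * b * a * a * a * b * a * a * b * b * b
      = b * a * a * a * b * a * a * a * b * a * a := by
    calc b * b * a * a * a * b * a * a * b * b * b
      _ = b * b * a * a * (a * b * a) * a * b * b * b := by group
      _ = b * b * a * a * (b * a * b) * a * b * b * b := by rw [h]
      _ = b * b * a * (a * b * a) * b * a * b * b * b := by group
      _ = b * b * a * (b * a * b) * b * a * b * b * b := by rw [h]
      _ = b * (b * a * b) * a * b * b * a * b * b * b := by group
      _ = b * (a * b * a) * a * b * b * a * b * b * b := by rw [← h]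
      _ = b * a * b * a * a * b * (b * a * b) * b * b := by group
      _ = b * a * b * a * a * b * (a * b * a) * b * b := by rw [← h]
      _ = b * a * b * a * (a * b * a) * b * a * b * b := by group
      _ = b * a * b * a * (b * a * b) * b * a * b * b := by rw [h]
      _ = b * a * (b * a * b) * a * b * b * a * b * b := by group
      _ = b * a * (a * b * a) * a * b * b * a * b * b := by rw [← h]
      _ = b * a * a * b * a * a * b * (b * a * b) * b := by group
      _ = b * a * a * b * a * a * b * (a * b * a) * b := by rw [← h]
      _ = b * a * a * b * a * (a * b * a) * b * a * b := by group
      _ = b * a * a * b * a * (b * a * b) * b * a * b := by rw [h]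
      _ = b * a * a * (b * a * b) * a * b * b * a * b := by group
      _ = b * a * a * (a * b * a) * a * b * b * a * b := by rw [← h]
      _ = b * a * a * a * b * a * a * b * (b * a * b) := by group
      _ = b * a * a * a * b * a * a * b * (a * b * a) := by rw [← h]
      _ = b * a * a * a * b * a * a * (b * a * b) * a := by group
      _ = b * a * a * a * b * a * a * (a * b * a) * a := by rw [← h]
      _ = b * a * a * a * b * a * a * a * b * a * a := by group
  have hc : b ^ 3 * (b⁻¹ * a ^ 3 * b) * (a ^ 2 * b ^ 3 * (a ^ 2)⁻¹) * a ^ 2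
      = (b * a ^ 3 * b * a ^ 3 * b) * a ^ 2 := by
    calc b ^ 3 * (b⁻¹ * a ^ 3 * b) * (a ^ 2 * b ^ 3 * (a ^ 2)⁻¹) * a ^ 2
      _ = b * b * a * a * a * b * a * a * b * b * b := by
          simp [pow_succ, pow_zero, one_mul, mul_assoc, mul_inv_rev]
      _ = b * a * a * a * b * a * a * a * b * a * a := key
      _ = (b * a ^ 3 * b * a ^ 3 * b) * a ^ 2 := by
          simp [pow_succ, pow_zero, one_mul, mul_assoc]
  exact mul_right_cancel hc

/-- In `B_n`, for `1 ≤ i ≤ n - 2`, the product of the three cusp braids from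
regenerating a tangency on the line side satisfies
`σ_{i+1}³ (σ_{i+1}⁻¹ σ_i³ σ_{i+1})(σ_i² σ_{i+1}³ σ_i⁻²) = σ_{i+1} σ_i³ σ_{i+1} σ_i³ σ_{i+1}`. -/
theorem three_cusps_line_side (n i : ℕ) (h1 : 1 ≤ i) (h2 : i ≤ n - 2) :
    σ n (i + 1) ^ 3 * ((σ n (i + 1))⁻¹ * σ n i ^ 3 * σ n (i + 1)) *
        (σ n i ^ 2 * σ n (i + 1) ^ 3 * (σ n i ^ 2)⁻¹) =
      σ n (i + 1) * σ n i ^ 3 * σ n (i + 1) * σ n i ^ 3 * σ n (i + 1) := by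
  have hn : 3 ≤ n := by omega
  have hi1 : 1 ≤ i ∧ i ≤ n - 1 := ⟨h1, by omega⟩
  have hi2 : 1 ≤ i + 1 ∧ i + 1 ≤ n - 1 := ⟨by omega, by omega⟩
  set I : Fin (n - 1) := ⟨i - 1, by omega⟩ with hI
  set J : Fin (n - 1) := ⟨i + 1 - 1, by omega⟩ with hJ
  have ha : σ n i = PresentedGroup.of I := by rw [σ]; exact dif_pos hi1
  have hb : σ n (i + 1) = PresentedGroup.of J := by rw [σ]; exact dif_pos hi2
  have hrel : (I : ℕ) + 1 = (J : ℕ) := by simp [hI, hJ]; omega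
  have hmem : FreeGroup.of I * FreeGroup.of J * FreeGroup.of I *
      (FreeGroup.of J * FreeGroup.of I * FreeGroup.of J)⁻¹ ∈ braidRels (n - 1) :=
    Or.inl ⟨I, J, hrel, rfl⟩
  have hone : PresentedGroup.mk (braidRels (n - 1))
      (FreeGroup.of I * FreeGroup.of J * FreeGroup.of I *
        (FreeGroup.of J * FreeGroup.of I * FreeGroup.of J)⁻¹) = 1 :=
    (QuotientGroup.eq_one_iff _).mpr (Subgroup.subset_normalClosure hmem)
  have h : σ n i * σ n (i + 1) * σ n i = σ n (i + 1) * σ n i * σ n (i + 1) := by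
    rw [ha, hb]
    have := hone
    simp only [map_mul, map_inv] at this
    have h2 := mul_inv_eq_one.mp this
    exact h2
  exact cusp_key (σ n i) (σ n (i + 1)) h
end

section
/- In the Artin braid group B_n, for every index i with 2 ≤ i ≤ n−2, writing a = σ_{i−1}, b = σ_i, c = σ_{i+1} (so that aba = bab, bcb = cbc, and ac = ca), the product of the four node braids obtained by regenerating a single node into four nodes satisfies (c^{−1} b² c) · b² · (c^{−1} b^{−1} a² b c) · (b^{−1} a² b) = b a c b² a c b. -/

private lemma braid_rel1 {m : ℕ} (i j : Fin m) (h : (i:ℕ)+1 = (j:ℕ)) :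
    (PresentedGroup.of i : PresentedGroup (braidRels m)) * PresentedGroup.of j * PresentedGroup.of i
      = PresentedGroup.of j * PresentedGroup.of i * PresentedGroup.of j := by
  have hr : (FreeGroup.of i * FreeGroup.of j * FreeGroup.of i *
      (FreeGroup.of j * FreeGroup.of i * FreeGroup.of j)⁻¹) ∈ braidRels m :=
    Or.inl ⟨i, j, h, rfl⟩
  have h1 : (QuotientGroup.mk (FreeGroup.of i * FreeGroup.of j * FreeGroup.of i *
      (FreeGroup.of j * FreeGroup.of i * FreeGroup.of j)⁻¹) : PresentedGroup (braidRels m)) = 1 := by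
    rw [QuotientGroup.eq_one_iff]
    exact Subgroup.subset_normalClosure hr
  rw [QuotientGroup.mk_mul, QuotientGroup.mk_inv, mul_inv_eq_one] at h1
  exact h1

private lemma braid_rel2 {m : ℕ} (i j : Fin m) (h : (i:ℕ)+2 ≤ (j:ℕ)) :
    (PresentedGroup.of i : PresentedGroup (braidRels m)) * PresentedGroup.of j
      = PresentedGroup.of j * PresentedGroup.of i := by
  have hr : (FreeGroup.of i * FreeGroup.of j * (FreeGroup.of i)⁻¹ * (FreeGroup.of j)⁻¹)
      ∈ braidRels m := Or.inr ⟨i, j, h, rfl⟩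
  have h1 : (QuotientGroup.mk (FreeGroup.of i * FreeGroup.of j * (FreeGroup.of i)⁻¹ *
      (FreeGroup.of j)⁻¹) : PresentedGroup (braidRels m)) = 1 := by
    rw [QuotientGroup.eq_one_iff]
    exact Subgroup.subset_normalClosure hr
  rw [QuotientGroup.mk_mul, QuotientGroup.mk_mul, QuotientGroup.mk_inv, QuotientGroup.mk_inv] at h1
  have h2 := mul_inv_eq_one.mp h1
  exact mul_inv_eq_iff_eq_mul.mp h2


lemma braid_key {G : Type*} [Group G] (a b c : G)
    (hab : a * b * a = b * a * b) (hbc : b * c * b = c * b * c) (hac : a * c = c * a) :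
    (c⁻¹ * b ^ 2 * c) * b ^ 2 * (c⁻¹ * b⁻¹ * a ^ 2 * b * c) * (b⁻¹ * a ^ 2 * b) =
      b * a * c * b ^ 2 * a * c * b := by
  have hca : c * a = a * c := hac.symm
  have hac' : c⁻¹ * a = a * c⁻¹ := by
    calc c⁻¹ * a = c⁻¹ * (a * c) * c⁻¹ := by (try simp only [pow_two]); group
    _ = c⁻¹ * (c * a) * c⁻¹ := by rw [hac]
    _ = a * c⁻¹ := by (try simp only [pow_two]); group
  have hca' : a⁻¹ * c = c * a⁻¹ := by
    calc a⁻¹ * c = a⁻¹ * (c * a) * a⁻¹ := by (try simp only [pow_two]); group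
    _ = a⁻¹ * (a * c) * a⁻¹ := by rw [hca]
    _ = c * a⁻¹ := by (try simp only [pow_two]); group
  have hc2a : c ^ 2 * a = a * c ^ 2 := by
    calc c ^ 2 * a = c * (c * a) := by (try simp only [pow_two]); group
    _ = c * (a * c) := by rw [hca]
    _ = (c * a) * c := by (try simp only [pow_two]); group
    _ = (a * c) * c := by rw [hca]
    _ = a * c ^ 2 := by (try simp only [pow_two]); group
  have h1 : c⁻¹ * b * c = b * c * b⁻¹ := by
    calc c⁻¹ * b * c = c⁻¹ * (b * c * b) * b⁻¹ := by (try simp only [pow_two]); group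
    _ = c⁻¹ * (c * b * c) * b⁻¹ := by rw [hbc]
    _ = b * c * b⁻¹ := by (try simp only [pow_two]); group
  have e1 : c⁻¹ * b ^ 2 * c = b * c ^ 2 * b⁻¹ := by
    calc c⁻¹ * b ^ 2 * c = (c⁻¹ * b * c) * (c⁻¹ * b * c) := by (try simp only [pow_two]); group
    _ = (b * c * b⁻¹) * (b * c * b⁻¹) := by rw [h1]
    _ = b * c ^ 2 * b⁻¹ := by (try simp only [pow_two]); group
  have h2 : b⁻¹ * a * b = a * b * a⁻¹ := by
    calc b⁻¹ * a * b = b⁻¹ * (a * b * a) * a⁻¹ := by (try simp only [pow_two]); group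
    _ = b⁻¹ * (b * a * b) * a⁻¹ := by rw [hab]
    _ = a * b * a⁻¹ := by (try simp only [pow_two]); group
  have e2 : b⁻¹ * a ^ 2 * b = a * b ^ 2 * a⁻¹ := by
    calc b⁻¹ * a ^ 2 * b = (b⁻¹ * a * b) * (b⁻¹ * a * b) := by (try simp only [pow_two]); group
    _ = (a * b * a⁻¹) * (a * b * a⁻¹) := by rw [h2]
    _ = a * b ^ 2 * a⁻¹ := by (try simp only [pow_two]); group
  have e3 : c⁻¹ * b⁻¹ * a ^ 2 * b * c = a * (b * c ^ 2 * b⁻¹) * a⁻¹ := by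
    calc c⁻¹ * b⁻¹ * a ^ 2 * b * c = c⁻¹ * (b⁻¹ * a ^ 2 * b) * c := by (try simp only [pow_two]); group
    _ = c⁻¹ * (a * b ^ 2 * a⁻¹) * c := by rw [e2]
    _ = (c⁻¹ * a) * b ^ 2 * (a⁻¹ * c) := by (try simp only [pow_two]); group
    _ = (a * c⁻¹) * b ^ 2 * (c * a⁻¹) := by rw [hac', hca']
    _ = a * (c⁻¹ * b ^ 2 * c) * a⁻¹ := by (try simp only [pow_two]); group
    _ = a * (b * c ^ 2 * b⁻¹) * a⁻¹ := by rw [e1]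
  have ckey : c ^ 2 * b * c ^ 2 = c * b ^ 2 * c * b := by
    calc c ^ 2 * b * c ^ 2 = c * (c * b * c) * c := by (try simp only [pow_two]); group
    _ = c * (b * c * b) * c := by rw [← hbc]
    _ = c * b * (c * b * c) := by (try simp only [pow_two]); group
    _ = c * b * (b * c * b) := by rw [← hbc]
    _ = c * b ^ 2 * c * b := by (try simp only [pow_two]); group
  calc (c⁻¹ * b ^ 2 * c) * b ^ 2 * (c⁻¹ * b⁻¹ * a ^ 2 * b * c) * (b⁻¹ * a ^ 2 * b)
      = (b * c ^ 2 * b⁻¹) * b ^ 2 * (a * (b * c ^ 2 * b⁻¹) * a⁻¹) * (a * b ^ 2 * a⁻¹) := by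
        rw [e1, e3, e2]
    _ = b * c ^ 2 * (b * a * b) * c ^ 2 * b * a⁻¹ := by (try simp only [pow_two]); group
    _ = b * c ^ 2 * (a * b * a) * c ^ 2 * b * a⁻¹ := by rw [← hab]
    _ = b * (c ^ 2 * a) * b * a * c ^ 2 * b * a⁻¹ := by (try simp only [pow_two]); group
    _ = b * (a * c ^ 2) * b * a * c ^ 2 * b * a⁻¹ := by rw [hc2a]
    _ = b * a * c ^ 2 * b * (a * c ^ 2) * b * a⁻¹ := by (try simp only [pow_two]); group
    _ = b * a * c ^ 2 * b * (c ^ 2 * a) * b * a⁻¹ := by rw [← hc2a]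
    _ = b * a * (c ^ 2 * b * c ^ 2) * a * b * a⁻¹ := by (try simp only [pow_two]); group
    _ = b * a * (c * b ^ 2 * c * b) * a * b * a⁻¹ := by rw [ckey]
    _ = b * a * c * b ^ 2 * c * (b * a * b) * a⁻¹ := by (try simp only [pow_two]); group
    _ = b * a * c * b ^ 2 * c * (a * b * a) * a⁻¹ := by rw [← hab]
    _ = b * a * c * b ^ 2 * (c * a) * b := by (try simp only [pow_two]); group
    _ = b * a * c * b ^ 2 * (a * c) * b := by rw [hca]
    _ = b * a * c * b ^ 2 * a * c * b := by (try simp only [pow_two]); group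

/-- In `B_n`, for `2 ≤ i ≤ n - 2`, writing `a = σ_{i-1}`, `b = σ_i`, `c = σ_{i+1}`,
the product of the four node braids obtained by regenerating a single node into four
nodes satisfies `(c⁻¹ b² c) b² (c⁻¹ b⁻¹ a² b c)(b⁻¹ a² b) = b a c b² a c b`. -/
theorem four_nodes_regeneration (n i : ℕ) (h1 : 2 ≤ i) (h2 : i ≤ n - 2) :
    ((σ n (i + 1))⁻¹ * σ n i ^ 2 * σ n (i + 1)) * σ n i ^ 2 *
        ((σ n (i + 1))⁻¹ * (σ n i)⁻¹ * σ n (i - 1) ^ 2 * σ n i * σ n (i + 1)) *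
        ((σ n i)⁻¹ * σ n (i - 1) ^ 2 * σ n i) =
      σ n i * σ n (i - 1) * σ n (i + 1) * σ n i ^ 2 * σ n (i - 1) * σ n (i + 1) * σ n i := by
  have hn : 4 ≤ n := by omega
  have hlt1 : i - 2 < n - 1 := by omega
  have hlt2 : i - 1 < n - 1 := by omega
  have hlt3 : i < n - 1 := by omega
  have ha : σ n (i - 1) = (PresentedGroup.of (⟨i - 2, hlt1⟩ : Fin (n - 1)) :
      PresentedGroup (braidRels (n - 1))) := by
    rw [σ]; refine (dif_pos (show 1 ≤ i - 1 ∧ i - 1 ≤ n - 1 by omega)).trans ?_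
    congr 1
  have hb : σ n i = (PresentedGroup.of (⟨i - 1, hlt2⟩ : Fin (n - 1)) :
      PresentedGroup (braidRels (n - 1))) := by
    rw [σ]; exact dif_pos (show 1 ≤ i ∧ i ≤ n - 1 by omega)
  have hc : σ n (i + 1) = (PresentedGroup.of (⟨i, hlt3⟩ : Fin (n - 1)) :
      PresentedGroup (braidRels (n - 1))) := by
    rw [σ]; refine (dif_pos (show 1 ≤ i + 1 ∧ i + 1 ≤ n - 1 by omega)).trans ?_
    congr 1
  rw [ha, hb, hc]
  exact braid_key _ _ _
    (braid_rel1 _ _ (by simp; omega))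
    (braid_rel1 _ _ (by simp; omega))
    (braid_rel2 _ _ (by simp; omega))
end

section
/- In the Artin braid group B_4, the braid of the complete regeneration of a 2-point of type (B) (three cusps followed by a branch point) satisfies [σ_2³ · (σ_2^{−1} σ_1³ σ_2) · (σ_1² σ_2³ σ_1^{−2})] · [(σ_2 σ_1² σ_2)^{−1} σ_3 (σ_2 σ_1² σ_2)] = σ_2 σ_1² σ_2 σ_1 σ_3 σ_2 σ_1² σ_2. -/
/-- In `B_4`, the braid of the complete regeneration of a 2-point of type (B):
`[σ₂³ (σ₂⁻¹ σ₁³ σ₂)(σ₁² σ₂³ σ₁⁻²)] [(σ₂ σ₁² σ₂)⁻¹ σ₃ (σ₂ σ₁² σ₂)]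
  = σ₂ σ₁² σ₂ σ₁ σ₃ σ₂ σ₁² σ₂`. -/
theorem two_point_type_B_braid :
    (σ 4 2 ^ 3 * ((σ 4 2)⁻¹ * σ 4 1 ^ 3 * σ 4 2) * (σ 4 1 ^ 2 * σ 4 2 ^ 3 * (σ 4 1 ^ 2)⁻¹)) *
        ((σ 4 2 * σ 4 1 ^ 2 * σ 4 2)⁻¹ * σ 4 3 * (σ 4 2 * σ 4 1 ^ 2 * σ 4 2)) =
      σ 4 2 * σ 4 1 ^ 2 * σ 4 2 * σ 4 1 * σ 4 3 * σ 4 2 * σ 4 1 ^ 2 * σ 4 2 := by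
  have key : ∀ i j : Fin 3, (i : ℕ) + 1 = (j : ℕ) →
      (PresentedGroup.of i * PresentedGroup.of j * PresentedGroup.of i :
        PresentedGroup (braidRels 3)) =
      PresentedGroup.of j * PresentedGroup.of i * PresentedGroup.of j := by
    intro i j hij
    have hmem : (FreeGroup.of i * FreeGroup.of j * FreeGroup.of i *
        (FreeGroup.of j * FreeGroup.of i * FreeGroup.of j)⁻¹) ∈ braidRels 3 :=
      Or.inl ⟨i, j, hij, rfl⟩
    have h1 : ((QuotientGroup.mk (FreeGroup.of i * FreeGroup.of j * FreeGroup.of i *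
        (FreeGroup.of j * FreeGroup.of i * FreeGroup.of j)⁻¹)) :
        PresentedGroup (braidRels 3)) = 1 := by
      rw [QuotientGroup.eq_one_iff]
      exact Subgroup.subset_normalClosure hmem
    have h2 : (PresentedGroup.of i * PresentedGroup.of j * PresentedGroup.of i) *
        (PresentedGroup.of j * PresentedGroup.of i * PresentedGroup.of j :
          PresentedGroup (braidRels 3))⁻¹ = 1 := h1
    exact mul_inv_eq_one.mp h2
  set a := σ 4 1 with ha
  set b := σ 4 2 with hb
  set c := σ 4 3 with hc
  have ha' : a = (PresentedGroup.of (⟨0, by omega⟩ : Fin 3) :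
      PresentedGroup (braidRels 3)) := rfl
  have hb' : b = (PresentedGroup.of (⟨1, by omega⟩ : Fin 3) :
      PresentedGroup (braidRels 3)) := rfl
  have hab : a * b * a = b * a * b := by
    rw [ha', hb']
    exact key ⟨0, by omega⟩ ⟨1, by omega⟩ rfl
  have hL : b * b * a * a * a * b * a * a * b * b * b =
      b * a ^ 2 * b * a * (b * a ^ 2 * b * a ^ 2) := by
    calc
      b * b * a * a * a * b * a * a * b * b * b
      _ = b * b * a * a * (a * b * a) * a * b * b * b := by group
      _ = b * b * a * a * (b * a * b) * a * b * b * b := by rw [hab]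
      _ = b * b * a * (a * b * a) * b * a * b * b * b := by group
      _ = b * b * a * (b * a * b) * b * a * b * b * b := by rw [hab]
      _ = b * (b * a * b) * a * b * b * a * b * b * b := by group
      _ = b * (a * b * a) * a * b * b * a * b * b * b := by rw [← hab]
      _ = b * a * b * a * a * b * (b * a * b) * b * b := by group
      _ = b * a * b * a * a * b * (a * b * a) * b * b := by rw [← hab]
      _ = b * a * b * a * (a * b * a) * b * a * b * b := by group
      _ = b * a * b * a * (b * a * b) * b * a * b * b := by rw [hab]
      _ = b * a * (b * a * b) * a * b * b * a * b * b := by group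
      _ = b * a * (a * b * a) * a * b * b * a * b * b := by rw [← hab]
      _ = b * a * a * b * a * a * b * (b * a * b) * b := by group
      _ = b * a * a * b * a * a * b * (a * b * a) * b := by rw [← hab]
      _ = b * a * a * b * a * (a * b * a) * b * a * b := by group
      _ = b * a * a * b * a * (b * a * b) * b * a * b := by rw [hab]
      _ = b * a * a * b * a * b * a * b * (b * a * b) := by group
      _ = b * a * a * b * a * b * a * b * (a * b * a) := by rw [← hab]
      _ = b * a * a * b * a * b * a * (b * a * b) * a := by group
      _ = b * a * a * b * a * b * a * (a * b * a) * a := by rw [← hab]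
      _ = b * a ^ 2 * b * a * (b * a ^ 2 * b * a ^ 2) := by simp only [pow_two, mul_assoc]
  calc (b ^ 3 * (b⁻¹ * a ^ 3 * b) * (a ^ 2 * b ^ 3 * (a ^ 2)⁻¹)) *
        ((b * a ^ 2 * b)⁻¹ * c * (b * a ^ 2 * b))
      = (b * b * a * a * a * b * a * a * b * b * b) *
        ((b * a ^ 2 * b * a ^ 2)⁻¹ * (c * (b * a ^ 2 * b))) := by simp only [pow_succ, pow_zero, one_mul, mul_inv_rev, mul_assoc, inv_mul_cancel_left, mul_inv_cancel_left]
    _ = (b * a ^ 2 * b * a * (b * a ^ 2 * b * a ^ 2)) *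
        ((b * a ^ 2 * b * a ^ 2)⁻¹ * (c * (b * a ^ 2 * b))) := by rw [hL]
    _ = b * a ^ 2 * b * a * c * b * a ^ 2 * b := by group
end
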